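/- Let (W,S) be a Coxeter system with finite index set B, let p : Option B → ℝ≥0 be step weights satisfying p (some i) ≤ p none for every i : B, let w ∈ W and let s = s i be a simple reflection with ℓ(w * s) > ℓ(w). Then for every n : ℕ, Wt n (w * s) ≤ Wt n w. -/

import Mathlib

open scoped NNReal

/-- The total weight of lazy walks of length `n` (each step an element of `Option B`,
interpreted as `1` for `none` and the simple reflection `cs.simple i` for `some i`,
with step weights `p`) whose steps multiply, in order, to `w`. -/
noncomputable def lazyWalkWeight {B W : Type*} [Fintype B] [DecidableEq W] [Group W]
    {M : CoxeterMatrix B} (cs : CoxeterSystem M W) (p : Option B → ℝ≥0)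
    (n : ℕ) (w : W) : ℝ≥0 :=
  ∑ f ∈ Finset.univ.filter (fun f : Fin n → Option B =>
      (List.ofFn fun j => ((f j).elim 1 cs.simple)).prod = w),
    ∏ j : Fin n, p (f j)

set_option linter.unusedSectionVars false


namespace LazyWalkAux

open CoxeterSystem List Finset

variable {B W : Type*} [Group W] [DecidableEq W] {M : CoxeterMatrix B} (cs : CoxeterSystem M W)

/-- The Tits permutation representation on `W × ZMod 2`. -/
def eta (i : B) : Function.End (W × ZMod 2) :=
  fun q => (cs.simple i * q.1 * cs.simple i, q.2 + if q.1 = cs.simple i then 1 else 0)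

lemma eta_cond_iff (a b : B) (x : W) :
    cs.simple b * x * cs.simple b = cs.simple a ↔
      x = cs.simple b * cs.simple a * cs.simple b := by
  constructor
  · intro h
    have := congrArg (fun z => cs.simple b * z * cs.simple b) h
    simpa [mul_assoc, cs.simple_mul_simple_cancel_left] using this
  · rintro rfl
    simp [mul_assoc, cs.simple_mul_simple_cancel_left, cs.simple_mul_simple_self]

lemma one_end_apply (q : W × ZMod 2) : (1 : Function.End (W × ZMod 2)) q = q := rfl

lemma eta_pow_apply (a b : B) (n : ℕ) (q : W × ZMod 2) :
    (((eta cs a * eta cs b) : Function.End (W × ZMod 2)) ^ n) q =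
      ((cs.simple a * cs.simple b) ^ n * q.1 * ((cs.simple a * cs.simple b) ^ n)⁻¹,
        q.2 + ∑ l ∈ Finset.range n,
          ((if (cs.simple a * cs.simple b) ^ l * q.1 * ((cs.simple a * cs.simple b) ^ l)⁻¹
              = cs.simple b then (1 : ZMod 2) else 0) +
            if (cs.simple a * cs.simple b) ^ l * q.1 * ((cs.simple a * cs.simple b) ^ l)⁻¹
              = cs.simple b * cs.simple a * cs.simple b then (1 : ZMod 2) else 0)) := by
  induction n generalizing q with
  | zero => simp [one_end_apply]
  | succ n ih =>
    have hstep : (((eta cs a * eta cs b) : Function.End (W × ZMod 2)) ^ (n+1)) q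
        = (((eta cs a * eta cs b) : Function.End (W × ZMod 2)) ^ n) ((eta cs a * eta cs b) q) := by
      rw [pow_succ]; rfl
    have hone : ((eta cs a * eta cs b) : Function.End (W × ZMod 2)) q
        = ((cs.simple a * cs.simple b) * q.1 * (cs.simple a * cs.simple b)⁻¹,
            q.2 + ((if q.1 = cs.simple b then (1 : ZMod 2) else 0) +
              if q.1 = cs.simple b * cs.simple a * cs.simple b then (1 : ZMod 2) else 0)) := by
      show eta cs a (eta cs b q) = _
      unfold eta
      refine Prod.ext ?_ ?_
      · simp [mul_inv_rev, cs.inv_simple, mul_assoc]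
      · simp only [eta_cond_iff cs a b q.1, add_assoc]
    rw [hstep, hone, ih]
    have hterm : ∀ (l : ℕ) (X : W),
        ((cs.simple a * cs.simple b) ^ l * ((cs.simple a * cs.simple b) * q.1 *
          (cs.simple a * cs.simple b)⁻¹) * ((cs.simple a * cs.simple b) ^ l)⁻¹ = X)
        = ((cs.simple a * cs.simple b) ^ (l + 1) * q.1 *
            ((cs.simple a * cs.simple b) ^ (l + 1))⁻¹ = X) := by
      intro l X
      congr 1
      simp [pow_succ, mul_inv_rev, mul_assoc]
    refine Prod.ext ?_ ?_
    · dsimp only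
      simp [pow_succ, mul_inv_rev, mul_assoc]
    · dsimp only
      rw [Finset.sum_range_succ' _ n]
      simp only [hterm, pow_zero, inv_one, one_mul, mul_one]
      ring


lemma conj_eq_iff' (g x y : W) : g * x * g⁻¹ = y ↔ x = g⁻¹ * y * g := by
  constructor
  · rintro rfl; group
  · rintro rfl; group

omit [DecidableEq W] in
lemma simple_mul_pow (a b : B) (l : ℕ) :
    cs.simple b * (cs.simple a * cs.simple b) ^ l * cs.simple b
      = ((cs.simple a * cs.simple b) ^ l)⁻¹ := by
  have h := conj_pow (i := l) (a := cs.simple b) (b := cs.simple a * cs.simple b)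
  have h2 : cs.simple b * (cs.simple a * cs.simple b) * (cs.simple b)⁻¹
      = (cs.simple a * cs.simple b)⁻¹ := by
    simp [cs.inv_simple, mul_inv_rev, mul_assoc, cs.simple_mul_simple_cancel_left]
  rw [h2, inv_pow, cs.inv_simple] at h
  exact h.symm

omit [DecidableEq W] in
/-- `s b * s a * s b = (s a * s b)⁻¹ * s b`. -/
lemma sbsasb_eq (a b : B) :
    cs.simple b * cs.simple a * cs.simple b = (cs.simple a * cs.simple b)⁻¹ * cs.simple b := by
  simp [mul_inv_rev, cs.inv_simple, mul_assoc]

lemma sum_range_shift_one {A : Type*} [AddCommGroup A] (f : ℕ → A) (m : ℕ)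
    (hf : ∀ l, f (l + m) = f l) :
    ∑ l ∈ Finset.range m, f (l + 1) = ∑ l ∈ Finset.range m, f l := by
  have h1 := Finset.sum_range_succ' f m
  have h2 := Finset.sum_range_succ f m
  have h3 : f m = f 0 := by simpa using hf 0
  have h4 := h1.symm.trans h2
  rw [h3] at h4
  exact add_right_cancel h4

lemma sum_range_shift {A : Type*} [AddCommGroup A] (f : ℕ → A) (m : ℕ)
    (hf : ∀ l, f (l + m) = f l) (h : ℕ) :
    ∑ l ∈ Finset.range m, f (l + h) = ∑ l ∈ Finset.range m, f l := by
  induction h with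
  | zero => simp
  | succ h ih =>
    have e1 : ∑ l ∈ Finset.range m, f (l + (h + 1))
        = ∑ l ∈ Finset.range m, (fun t => f (t + h)) (l + 1) := by
      refine Finset.sum_congr rfl fun l _ => ?_
      congr 1
      omega
    rw [e1, sum_range_shift_one (fun t => f (t + h)) m
      (fun l => by simpa [show l + m + h = l + h + m by omega] using hf (l + h)), ih]

theorem eta_liftable : M.IsLiftable (eta cs) := by
  intro a b
  funext q
  rw [eta_pow_apply, one_end_apply]
  set g := cs.simple a * cs.simple b with hg
  set m := M a b with hm
  have hgm : g ^ m = 1 := cs.simple_mul_simple_pow a b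
  have hper : ∀ (X : W) (l : ℕ),
      (g ^ (l + m) * q.1 * (g ^ (l + m))⁻¹ = X) = (g ^ l * q.1 * (g ^ l)⁻¹ = X) := by
    intro X l
    rw [pow_add, hgm, mul_one]
  refine Prod.ext ?_ ?_
  · dsimp only
    rw [hgm]
    group
  · dsimp only
    rw [show (q.2 + _ = q.2) = _ from rfl]
    suffices hS : (∑ l ∈ Finset.range m,
        ((if g ^ l * q.1 * (g ^ l)⁻¹ = cs.simple b then (1 : ZMod 2) else 0) +
          if g ^ l * q.1 * (g ^ l)⁻¹ = cs.simple b * cs.simple a * cs.simple b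
            then (1 : ZMod 2) else 0)) = 0 by
      rw [hS, add_zero]
    rcases Nat.even_or_odd m with ⟨k, hk⟩ | ⟨k, hk⟩
    · -- even case : half-period
      have hk2 : g ^ k * g ^ k = 1 := by rw [← pow_add, ← hk, hgm]
      have hkinv : (g ^ k)⁻¹ = g ^ k := by
        rw [inv_eq_iff_mul_eq_one, hk2]
      have hcomb : g ^ k * cs.simple b = cs.simple b * g ^ k := by
        have h0 := simple_mul_pow cs a b k
        rw [← hg, hkinv] at h0
        have h := congrArg (fun z => z * cs.simple b) h0
        simp only [mul_assoc, cs.simple_mul_simple_self, mul_one] at h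
        exact h.symm
      have hfix : ∀ X : W, g ^ k * X * (g ^ k)⁻¹ = X →
          ∀ l, (g ^ (l + k) * q.1 * (g ^ (l + k))⁻¹ = X) = (g ^ l * q.1 * (g ^ l)⁻¹ = X) := by
        intro X hX l
        apply propext
        have hrw : g ^ (l + k) * q.1 * (g ^ (l + k))⁻¹
            = g ^ k * (g ^ l * q.1 * (g ^ l)⁻¹) * (g ^ k)⁻¹ := by
          rw [pow_add]
          group
        rw [hrw]
        constructor
        · intro hh
          have := (conj_eq_iff' (g ^ k) _ _).mp hh
          rw [this, ← (conj_eq_iff' (g ^ k) _ _).mp hX]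
        · intro hh
          rw [hh]
          exact hX
      have hfixb : g ^ k * cs.simple b * (g ^ k)⁻¹ = cs.simple b := by
        rw [hcomb]
        group
      have hcomg : g ^ k * (cs.simple a * cs.simple b)⁻¹ = (cs.simple a * cs.simple b)⁻¹ * g ^ k := by
        rw [hg]
        exact (((Commute.refl (cs.simple a * cs.simple b)).pow_left k).inv_right).eq
      have hfixc : g ^ k * (cs.simple b * cs.simple a * cs.simple b) * (g ^ k)⁻¹
          = cs.simple b * cs.simple a * cs.simple b := by
        rw [sbsasb_eq]
        rw [show g ^ k * ((cs.simple a * cs.simple b)⁻¹ * cs.simple b) * (g ^ k)⁻¹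
            = g ^ k * (cs.simple a * cs.simple b)⁻¹ * (cs.simple b * (g ^ k)⁻¹) from by group]
        rw [hcomg]
        rw [show (cs.simple a * cs.simple b)⁻¹ * g ^ k * (cs.simple b * (g ^ k)⁻¹)
            = (cs.simple a * cs.simple b)⁻¹ * (g ^ k * cs.simple b * (g ^ k)⁻¹) from by group]
        rw [hfixb]
      -- split the range
      have hsplit : ∑ l ∈ Finset.range (k + k), ((if g ^ l * q.1 * (g ^ l)⁻¹ = cs.simple b then (1 : ZMod 2) else 0) +
          if g ^ l * q.1 * (g ^ l)⁻¹ = cs.simple b * cs.simple a * cs.simple b then (1 : ZMod 2) else 0)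
          = (∑ l ∈ Finset.range k, ((if g ^ l * q.1 * (g ^ l)⁻¹ = cs.simple b then (1 : ZMod 2) else 0) +
          if g ^ l * q.1 * (g ^ l)⁻¹ = cs.simple b * cs.simple a * cs.simple b then (1 : ZMod 2) else 0)) + ∑ l ∈ Finset.range k, ((if g ^ (l + k) * q.1 * (g ^ (l + k))⁻¹ = cs.simple b then (1 : ZMod 2) else 0) +
          if g ^ (l + k) * q.1 * (g ^ (l + k))⁻¹ = cs.simple b * cs.simple a * cs.simple b then (1 : ZMod 2) else 0) := by
        rw [Finset.range_eq_Ico, ← Finset.sum_Ico_consecutive _ (Nat.zero_le k) (Nat.le_add_right k k)]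
        congr 1
        · rw [Finset.range_eq_Ico]
        rw [Finset.sum_Ico_eq_sum_range]
        simp only [Nat.add_sub_cancel, ← Finset.range_eq_Ico]
        refine Finset.sum_congr rfl fun l _ => ?_
        rw [show k + l = l + k by omega]
      rw [hk, hsplit]
      simp only [hfix _ hfixb, hfix _ hfixc]
      exact CharTwo.add_self_eq_zero _
    · -- odd case : m = 2k+1, shift by k+1 matches the two families
      have hkey : g ^ (k + 1) * (cs.simple b * cs.simple a * cs.simple b) * (g ^ (k + 1))⁻¹
          = cs.simple b := by
        rw [sbsasb_eq]
        have hg1 : g ^ (k + 1) * (cs.simple a * cs.simple b)⁻¹ = g ^ k := by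
          rw [hg, pow_succ, mul_inv_cancel_right]
        have h1 : g ^ (k + 1) * ((cs.simple a * cs.simple b)⁻¹ * cs.simple b) * (g ^ (k + 1))⁻¹
            = g ^ k * (cs.simple b * (g ^ (k + 1))⁻¹) := by
          rw [show g ^ (k + 1) * ((cs.simple a * cs.simple b)⁻¹ * cs.simple b) * (g ^ (k + 1))⁻¹
              = g ^ (k + 1) * (cs.simple a * cs.simple b)⁻¹ * (cs.simple b * (g ^ (k + 1))⁻¹) from by
            group]
          rw [hg1]
        have h2 : cs.simple b * (g ^ (k + 1))⁻¹ = g ^ (k + 1) * cs.simple b := by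
          have := simple_mul_pow cs a b (k + 1)
          calc cs.simple b * (g ^ (k + 1))⁻¹
              = cs.simple b * (cs.simple b * g ^ (k + 1) * cs.simple b) := by rw [this]
            _ = g ^ (k + 1) * cs.simple b := by
                rw [← mul_assoc, ← mul_assoc, cs.simple_mul_simple_self, one_mul]
        rw [h1, h2, ← mul_assoc, ← pow_add]
        rw [show k + (k + 1) = 2 * k + 1 from by omega, ← hk, hgm, one_mul]
      -- χc l = χb (l + (k+1))
      have hcc : ∀ l, (g ^ l * q.1 * (g ^ l)⁻¹ = cs.simple b * cs.simple a * cs.simple b)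
          = (g ^ (l + (k + 1)) * q.1 * (g ^ (l + (k + 1)))⁻¹ = cs.simple b) := by
        intro l
        apply propext
        have hrw : g ^ (l + (k + 1)) * q.1 * (g ^ (l + (k + 1)))⁻¹
            = g ^ (k + 1) * (g ^ l * q.1 * (g ^ l)⁻¹) * (g ^ (k + 1))⁻¹ := by
          rw [pow_add]
          group
        rw [hrw]
        constructor
        · intro hh
          rw [hh]
          exact hkey
        · intro hh
          have h5 := (conj_eq_iff' (g ^ (k + 1)) _ _).mp hh
          have h6 := (conj_eq_iff' (g ^ (k + 1)) _ _).mp hkey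
          rw [h5, h6]
      rw [Finset.sum_add_distrib]
      simp only [hcc]
      rw [sum_range_shift (fun l => if g ^ l * q.1 * (g ^ l)⁻¹ = cs.simple b then (1 : ZMod 2) else 0) m
        (fun l => by simp only [hper]) (k + 1)]
      exact CharTwo.add_self_eq_zero _


noncomputable def etaHom : W →* Function.End (W × ZMod 2) :=
  cs.lift ⟨eta cs, eta_liftable cs⟩

lemma etaHom_wordProd (ω : List B) (q : W × ZMod 2) :
    etaHom cs (cs.wordProd ω) q = (cs.wordProd ω * q.1 * (cs.wordProd ω)⁻¹,
      q.2 + ((cs.rightInvSeq ω).count q.1 : ZMod 2)) := by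
  induction ω generalizing q with
  | nil => simp [CoxeterSystem.wordProd_nil, map_one, one_end_apply]
  | cons i ω ih =>
    rw [cs.wordProd_cons, map_mul]
    have happ : (etaHom cs (cs.simple i) * etaHom cs (cs.wordProd ω)) q
        = etaHom cs (cs.simple i) (etaHom cs (cs.wordProd ω) q) := rfl
    rw [happ, ih]
    have hs : etaHom cs (cs.simple i) = eta cs i := cs.lift_apply_simple _ i
    rw [hs]
    show (cs.simple i * _ * cs.simple i, _) = _
    refine Prod.ext ?_ ?_
    · dsimp only
      simp [mul_inv_rev, cs.inv_simple, mul_assoc]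
    · dsimp only
      have hris : cs.rightInvSeq (i :: ω)
          = (cs.wordProd ω)⁻¹ * cs.simple i * cs.wordProd ω :: cs.rightInvSeq ω := rfl
      rw [hris, List.count_cons]
      have hcond : (cs.wordProd ω * q.1 * (cs.wordProd ω)⁻¹ = cs.simple i)
          = (((cs.wordProd ω)⁻¹ * cs.simple i * cs.wordProd ω == q.1) = true) := by
        rw [beq_iff_eq]
        apply propext
        rw [conj_eq_iff']
        constructor
        · intro h; rw [h]
        · intro h; rw [← h]
      simp only [hcond]
      push_cast
      ring

/-- Strong exchange (for a simple right inversion): `s i` appears in the right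
inversion sequence of any word for `x`. -/
lemma simple_mem_rightInvSeq (x : W) (i : B) (hx : cs.length (x * cs.simple i) < cs.length x)
    (ω : List B) (hω : cs.wordProd ω = x) : cs.simple i ∈ cs.rightInvSeq ω := by
  obtain ⟨τ, hτred, hτ⟩ := cs.exists_reduced_word' (x * cs.simple i)
  have hlen : cs.length (x * cs.simple i) + 1 = cs.length x := by
    rcases cs.length_mul_simple x i with h | h
    · omega
    · exact h
  set ω₂ := τ.concat i with hω₂
  have hπ : cs.wordProd ω₂ = x := by
    rw [hω₂, cs.wordProd_concat, ← hτ]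
    simp [mul_assoc, cs.simple_mul_simple_cancel_right]
  have hred : cs.IsReduced ω₂ := by
    unfold CoxeterSystem.IsReduced
    rw [hπ, hω₂, List.length_concat]
    rw [← hlen]
    unfold CoxeterSystem.IsReduced at hτred
    rw [← hτred, hτ]
  have hmem : cs.simple i ∈ cs.rightInvSeq ω₂ := by
    rw [hω₂, cs.rightInvSeq_concat]
    simp
  have hcount : (cs.rightInvSeq ω₂).count (cs.simple i) = 1 := by
    have h1 : (cs.rightInvSeq ω₂).count (cs.simple i) ≤ 1 :=
      (List.nodup_iff_count_le_one.mp (hred.nodup_rightInvSeq)) _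
    have h2 : 0 < (cs.rightInvSeq ω₂).count (cs.simple i) := List.count_pos_iff.mpr hmem
    omega
  have htrans := (etaHom_wordProd cs ω (cs.simple i, 0)).symm.trans
    (by rw [hω, ← hπ] :
      etaHom cs (cs.wordProd ω) (cs.simple i, (0 : ZMod 2))
        = etaHom cs (cs.wordProd ω₂) (cs.simple i, (0 : ZMod 2)))
  rw [etaHom_wordProd cs ω₂ (cs.simple i, 0)] at htrans
  have hsnd := congrArg Prod.snd htrans
  dsimp only at hsnd
  rw [hcount] at hsnd
  by_contra hnmem
  rw [List.count_eq_zero_of_not_mem hnmem] at hsnd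
  simp at hsnd

lemma exchange_eraseIdx (x : W) (i : B) (hx : cs.length (x * cs.simple i) < cs.length x)
    (ω : List B) (hω : cs.wordProd ω = x) :
    ∃ l < ω.length, x * cs.simple i = cs.wordProd (ω.eraseIdx l) := by
  have hmem := simple_mem_rightInvSeq cs x i hx ω hω
  obtain ⟨l, hl, hget⟩ := List.getElem_of_mem hmem
  rw [cs.length_rightInvSeq] at hl
  refine ⟨l, hl, ?_⟩
  have := cs.wordProd_mul_getD_rightInvSeq ω l
  rw [List.getD_eq_getElem _ _ (by rw [cs.length_rightInvSeq]; exact hl), hget, hω] at this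
  exact this

/-- The key "lifting" lemma: if `ℓ(u sᵢ) > ℓ(u)` and `ℓ(sⱼ u sᵢ) < ℓ(sⱼ u)`
then `sⱼ u = u sᵢ`. -/
lemma simple_mul_eq_mul_simple (u : W) (i j : B)
    (h1 : cs.length u < cs.length (u * cs.simple i))
    (h3 : cs.length (cs.simple j * u * cs.simple i) < cs.length (cs.simple j * u)) :
    cs.simple j * u = u * cs.simple i := by
  have h1' : cs.length (u * cs.simple i) = cs.length u + 1 := by
    rcases cs.length_mul_simple u i with h | h
    · exact h
    · omega
  have h2 : cs.length (cs.simple j * u) = cs.length u + 1 := by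
    rcases cs.length_simple_mul u i with ha | ha <;>
    rcases cs.length_simple_mul (u * cs.simple i) j with hb | hb <;>
    rcases cs.length_simple_mul u j with hc | hc <;>
    rw [← mul_assoc] at hb <;> omega
  obtain ⟨ωu, hred, hωu⟩ := cs.exists_reduced_word' u
  have hπ : cs.wordProd (j :: ωu) = cs.simple j * u := by
    rw [cs.wordProd_cons, ← hωu]
  obtain ⟨l, hl, herase⟩ := exchange_eraseIdx cs (cs.simple j * u) i h3 (j :: ωu) hπ
  match l with
  | 0 =>
    rw [show (j :: ωu).eraseIdx 0 = ωu from rfl, ← hωu] at herase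
    have := congrArg (fun z => z * cs.simple i) herase
    simpa [cs.simple_mul_simple_cancel_right] using this
  | Nat.succ l' =>
    exfalso
    rw [show (j :: ωu).eraseIdx (l' + 1) = j :: ωu.eraseIdx l' from rfl] at herase
    rw [cs.wordProd_cons] at herase
    have hu : u * cs.simple i = cs.wordProd (ωu.eraseIdx l') := by
      have := congrArg (fun z => cs.simple j * z) herase
      simpa [mul_assoc, cs.simple_mul_simple_cancel_left] using this
    have hlen2 : cs.length (u * cs.simple i) ≤ (ωu.eraseIdx l').length := by
      rw [hu]
      exact cs.length_wordProd_le _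
    have hl' : l' < ωu.length := by
      simp at hl
      omega
    rw [List.length_eraseIdx, if_pos hl'] at hlen2
    unfold CoxeterSystem.IsReduced at hred
    rw [← hωu] at hred
    omega

end LazyWalkAux


namespace LazyWalkAux2

open Finset

variable {B : Type*} [DecidableEq B] [Fintype B] (M : CoxeterMatrix B)

/-- The standard bilinear form values `-cos (π / m)`. -/
noncomputable def gk (a b : B) : ℝ := - Real.cos (Real.pi / (M a b : ℕ))

/-- The geometric representation of the simple reflections, as plain functions. -/
noncomputable def gsigma (a : B) : Function.End (B → ℝ) :=
  fun v => fun d => v d + (-2 * ∑ c, gk M a c * v c) * (if d = a then (1:ℝ) else 0)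

lemma gk_self (a : B) : gk M a a = 1 := by
  unfold gk
  rw [M.diagonal a]
  norm_num

lemma gk_symm (a b : B) : gk M a b = gk M b a := by
  unfold gk
  rw [M.symmetric a b]

lemma gdot_one (e : B) (A : ℝ) (t : B) :
    ∑ c, gk M e c * (A * (if c = t then (1:ℝ) else 0)) = A * gk M e t := by
  rw [Finset.sum_eq_single t]
  · simp [mul_comm]
  · intro c _ hc
    simp [hc]
  · intro h
    exact absurd (Finset.mem_univ t) h

lemma gdot2 (e a b : B) (v : B → ℝ) (Aa Bb : ℝ) :
    ∑ c, gk M e c * (v c + Aa * (if c = a then (1:ℝ) else 0) + Bb * (if c = b then (1:ℝ) else 0))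
      = (∑ c, gk M e c * v c) + Aa * gk M e a + Bb * gk M e b := by
  have : ∀ c, gk M e c * (v c + Aa * (if c = a then (1:ℝ) else 0) + Bb * (if c = b then (1:ℝ) else 0))
      = gk M e c * v c + gk M e c * (Aa * (if c = a then (1:ℝ) else 0))
        + gk M e c * (Bb * (if c = b then (1:ℝ) else 0)) := by
    intro c; ring
  simp only [this, Finset.sum_add_distrib, gdot_one]

theorem gs_liftable : M.IsLiftable (gsigma M) := by
  intro a b
  by_cases hab : a = b
  · subst hab
    rw [M.diagonal a, pow_one]
    funext v
    show gsigma M a (gsigma M a v) = v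
    have h1 : gsigma M a v = fun d => v d + (-2 * ∑ c, gk M a c * v c) * (if d = a then (1:ℝ) else 0) := rfl
    rw [h1]
    funext d
    show (fun d => v d + _ * (if d = a then (1:ℝ) else 0)) d
        + (-2 * ∑ c, gk M a c * (v c + (-2 * ∑ c', gk M a c' * v c') * (if c = a then (1:ℝ) else 0)))
          * (if d = a then (1:ℝ) else 0) = v d
    have hdot : ∑ c, gk M a c * (v c + (-2 * ∑ c', gk M a c' * v c') * (if c = a then (1:ℝ) else 0))
        = (∑ c, gk M a c * v c) + (-2 * ∑ c', gk M a c' * v c') * gk M a a := by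
      have : ∀ c, gk M a c * (v c + (-2 * ∑ c', gk M a c' * v c') * (if c = a then (1:ℝ) else 0))
          = gk M a c * v c + gk M a c * ((-2 * ∑ c', gk M a c' * v c') * (if c = a then (1:ℝ) else 0)) := by
        intro c; ring
      simp only [this, Finset.sum_add_distrib, gdot_one]
    rw [hdot, gk_self]
    ring
  · set m := M a b with hm
    rcases Nat.eq_zero_or_pos m with hm0 | hmpos
    · rw [hm0, pow_zero]
    have hm1 : m ≠ 1 := M.off_diagonal a b hab
    have hm2 : 2 ≤ m := by omega
    set θ : ℝ := Real.pi / m with hθ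
    have hθpos : 0 < θ := by
      apply div_pos Real.pi_pos
      exact_mod_cast hmpos
    have hθlt : θ < Real.pi := by
      rw [hθ]
      apply div_lt_self Real.pi_pos
      exact_mod_cast (by omega : 1 < m)
    have hsin : 0 < Real.sin θ := Real.sin_pos_of_pos_of_lt_pi hθpos hθlt
    set C : ℝ := Real.cos θ with hC
    have hC2 : 1 - C ^ 2 ≠ 0 := by
      have h := Real.sin_sq θ
      rw [← hC] at h
      rw [← h]
      positivity
    have hkab : gk M a b = -C := by rw [hC, hθ, hm]; rfl
    have hkba : gk M b a = -C := by rw [← gk_symm, hkab]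
    funext v
    set x : ℝ := ∑ c, gk M a c * v c with hx
    set y : ℝ := ∑ c, gk M b c * v c with hy
    set P : ℕ → ℝ := fun n => Real.cos (2 * n * θ) with hP
    set R : ℕ → ℝ := fun n => Real.sin θ * Real.sin (2 * n * θ) with hR
    have hPrec : ∀ n : ℕ, P (n + 1) = (2 * C ^ 2 - 1) * P n - 2 * C * R n := by
      intro n
      rw [hP, hR, hC]
      dsimp only
      push_cast
      rw [show 2 * ((n : ℝ) + 1) * θ = 2 * n * θ + 2 * θ by ring]
      rw [Real.cos_add, Real.cos_two_mul, Real.sin_two_mul]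
      ring
    have hRrec : ∀ n : ℕ, R (n + 1) = (2 * C ^ 2 - 1) * R n + 2 * C * (1 - C ^ 2) * P n := by
      intro n
      rw [hP, hR, hC]
      dsimp only
      push_cast
      rw [show 2 * ((n : ℝ) + 1) * θ = 2 * n * θ + 2 * θ by ring]
      rw [Real.sin_add, Real.cos_two_mul, Real.sin_two_mul]
      have hs2 := Real.sin_sq θ
      linear_combination (2 * Real.cos θ * Real.cos (2 * n * θ)) * hs2
    set A : ℕ → ℝ := fun n => (((-C) * y - x) * (1 - P n) - y * R n) / (1 - C ^ 2) with hA
    set Bf : ℕ → ℝ := fun n => (((-C) * x - y) * (1 - P n) + x * R n) / (1 - C ^ 2) with hBf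
    have HB : ∀ n : ℕ, Bf (n + 1) = Bf n - 2 * (y + A n * (-C) + Bf n * 1) := by
      intro n
      rw [hA, hBf]
      dsimp only
      rw [hPrec n, hRrec n]
      field_simp
      ring
    have HA : ∀ n : ℕ, A (n + 1) = A n - 2 * (x + A n * 1 + Bf (n + 1) * (-C)) := by
      intro n
      rw [hA, hBf]
      dsimp only
      rw [hPrec n, hRrec n]
      field_simp
      ring
    have key : ∀ n : ℕ, ((gsigma M a * gsigma M b) ^ n) v
        = fun d => v d + A n * (if d = a then (1:ℝ) else 0) + Bf n * (if d = b then (1:ℝ) else 0) := by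
      intro n
      induction n with
      | zero =>
        have hP0 : P 0 = 1 := by simp [hP]
        have hR0 : R 0 = 0 := by simp [hR]
        have hA0 : A 0 = 0 := by
          rw [hA]; dsimp only; rw [hP0, hR0]; norm_num
        have hB0 : Bf 0 = 0 := by
          rw [hBf]; dsimp only; rw [hP0, hR0]; norm_num
        rw [pow_zero, hA0, hB0]
        funext d
        show v d = _
        ring
      | succ n ih =>
        rw [pow_succ']
        have happ : ((gsigma M a * gsigma M b) * (gsigma M a * gsigma M b) ^ n) v
            = gsigma M a (gsigma M b (((gsigma M a * gsigma M b) ^ n) v)) := rfl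
        rw [happ, ih]
        -- first apply gsigma b
        have hstepb : gsigma M b (fun d => v d + A n * (if d = a then (1:ℝ) else 0)
              + Bf n * (if d = b then (1:ℝ) else 0))
            = fun d => v d + A n * (if d = a then (1:ℝ) else 0)
              + Bf (n + 1) * (if d = b then (1:ℝ) else 0) := by
          funext d
          show (v d + A n * _ + Bf n * _) + (-2 * ∑ c, gk M b c * (v c + A n * _ + Bf n * _)) * _ = _
          rw [gdot2 M b a b v (A n) (Bf n), gk_self, hkba, ← hy, HB n]
          ring
        rw [hstepb]
        funext d
        show (v d + A n * _ + Bf (n + 1) * _) + (-2 * ∑ c, gk M a c * (v c + A n * _ + Bf (n + 1) * _)) * _ = _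
        rw [gdot2 M a a b v (A n) (Bf (n + 1)), gk_self, hkab, ← hx, HA n]
        ring
    rw [show ((1 : Function.End (B → ℝ))) v = v from rfl] at *
    show ((gsigma M a * gsigma M b) ^ m) v = v
    rw [key m]
    have hmne : (m : ℝ) ≠ 0 := by
      exact_mod_cast hmpos.ne'
    have hPm : P m = 1 := by
      rw [hP]
      dsimp only
      rw [show 2 * (m : ℝ) * θ = 2 * Real.pi by
        rw [hθ]; field_simp]
      exact Real.cos_two_pi
    have hRm : R m = 0 := by
      rw [hR]
      dsimp only
      rw [show 2 * (m : ℝ) * θ = 2 * Real.pi by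
        rw [hθ]; field_simp]
      rw [Real.sin_two_pi, mul_zero]
    have hAm : A m = 0 := by
      rw [hA]; dsimp only; rw [hPm, hRm]; simp
    have hBm : Bf m = 0 := by
      rw [hBf]; dsimp only; rw [hPm, hRm]; simp
    funext d
    rw [hAm, hBm]
    ring


theorem simple_injective {W : Type*} [Group W] (cs : CoxeterSystem M W) :
    Function.Injective cs.simple := by
  intro a b hab
  by_contra hne
  have h1 : gsigma M a = gsigma M b := by
    rw [← cs.lift_apply_simple (gs_liftable M) a, ← cs.lift_apply_simple (gs_liftable M) b, hab]
  have h2 := congrFun (congrFun h1 (fun d => if d = a then (1:ℝ) else 0)) a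
  simp only [gsigma] at h2
  rw [Finset.sum_congr rfl (fun c _ => mul_ite (c = a) (gk M a c) 1 0),
    Finset.sum_congr rfl (fun c _ => mul_ite (c = a) (gk M b c) 1 0)] at h2
  simp only [mul_one, mul_zero, Finset.sum_ite_eq', Finset.mem_univ, if_true, if_pos rfl,
    if_neg hne, gk_self, mul_one, mul_zero, add_zero] at h2
  norm_num at h2

end LazyWalkAux2

namespace LazyWalkAux3

variable {B W : Type*} [Fintype B] [DecidableEq W] [Group W]
    {M : CoxeterMatrix B} (cs : CoxeterSystem M W) (p : Option B → ℝ≥0)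

lemma keyLemma (u : W) (i j : B)
    (h1 : cs.length u < cs.length (u * cs.simple i))
    (h3 : cs.length (cs.simple j * u * cs.simple i) < cs.length (cs.simple j * u)) :
    cs.simple j * u = u * cs.simple i :=
  LazyWalkAux.simple_mul_eq_mul_simple cs u i j h1 h3

lemma simpleInj : Function.Injective cs.simple := by
  classical
  exact LazyWalkAux2.simple_injective M cs

lemma step_sq (x : Option B) : (x.elim 1 cs.simple) * (x.elim 1 cs.simple) = 1 := by
  cases x with
  | none => simp
  | some i => simpa using cs.simple_mul_simple_self i

lemma lazyWalkWeight_zero (w : W) :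
    lazyWalkWeight cs p 0 w = if (1 : W) = w then 1 else 0 := by
  unfold lazyWalkWeight
  rw [Finset.sum_filter]
  rw [show (Finset.univ : Finset (Fin 0 → Option B)) = {fun _ => none} from
    Finset.eq_singleton_iff_unique_mem.mpr
      ⟨Finset.mem_univ _, fun f _ => funext fun j => Fin.elim0 j⟩,
    Finset.sum_singleton]
  simp

lemma lazyWalkWeight_succ (n : ℕ) (w : W) :
    lazyWalkWeight cs p (n + 1) w
      = ∑ x : Option B, p x * lazyWalkWeight cs p n ((x.elim 1 cs.simple) * w) := by
  unfold lazyWalkWeight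
  rw [Finset.sum_filter]
  have key : ∀ f : Fin (n + 1) → Option B,
      (if (List.ofFn fun j => ((f j).elim 1 cs.simple)).prod = w then ∏ j, p (f j) else 0)
      = p (f 0) * (if (List.ofFn fun j => ((f (Fin.succ j)).elim 1 cs.simple)).prod
            = ((f 0).elim 1 cs.simple) * w then ∏ j : Fin n, p (f (Fin.succ j)) else 0) := by
    intro f
    rw [List.ofFn_succ, List.prod_cons, Fin.prod_univ_succ, mul_ite, mul_zero]
    refine if_congr ⟨fun h => ?_, fun h => ?_⟩ rfl rfl
    · rw [← h, ← mul_assoc, step_sq cs (f 0), one_mul]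
    · rw [h, ← mul_assoc, step_sq cs (f 0), one_mul]
  rw [Finset.sum_congr rfl (fun f _ => key f)]
  rw [← Equiv.sum_comp (Fin.consEquiv (fun _ : Fin (n + 1) => Option B))
    (fun f : Fin (n + 1) → Option B => p (f 0) *
      (if (List.ofFn fun j => ((f (Fin.succ j)).elim 1 cs.simple)).prod
          = ((f 0).elim 1 cs.simple) * w then ∏ j : Fin n, p (f (Fin.succ j)) else 0))]
  rw [Fintype.sum_prod_type]
  refine Finset.sum_congr rfl fun x _ => ?_
  rw [Finset.mul_sum, Finset.sum_filter]
  refine Finset.sum_congr rfl fun g _ => ?_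
  simp [Fin.consEquiv, Fin.cons_zero, Fin.cons_succ]

theorem main (hp : ∀ i : B, p (some i) ≤ p none) (w : W) (i : B)
    (h : cs.length w < cs.length (w * cs.simple i)) (n : ℕ) :
    lazyWalkWeight cs p n (w * cs.simple i) ≤ lazyWalkWeight cs p n w := by
  induction n generalizing w i with
  | zero =>
    rw [lazyWalkWeight_zero, lazyWalkWeight_zero]
    have hne : (1 : W) ≠ w * cs.simple i := by
      intro h1
      rw [← h1] at h
      simp [CoxeterSystem.length_one] at h
    rw [if_neg hne]
    exact zero_le'
  | succ n ih =>
    rw [lazyWalkWeight_succ, lazyWalkWeight_succ, Fintype.sum_option, Fintype.sum_option]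
    simp only [Option.elim_none, Option.elim_some, one_mul]
    -- the set of j with s j * w = w * s i
    set T : Finset B := Finset.univ.filter (fun j => cs.simple j * w = w * cs.simple i) with hT
    have hsplit : ∀ v : W, ∑ j : B, p (some j) * lazyWalkWeight cs p n (cs.simple j * v)
        = (∑ j ∈ T, p (some j) * lazyWalkWeight cs p n (cs.simple j * v))
          + ∑ j ∈ Finset.univ.filter (fun j => ¬(cs.simple j * w = w * cs.simple i)),
              p (some j) * lazyWalkWeight cs p n (cs.simple j * v) := by
      intro v
      rw [hT, Finset.sum_filter_add_sum_filter_not]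
    rw [hsplit, hsplit]
    -- terms over T
    have hTv : ∀ j ∈ T, p (some j) * lazyWalkWeight cs p n (cs.simple j * (w * cs.simple i))
        = p (some j) * lazyWalkWeight cs p n w := by
      intro j hj
      rw [hT, Finset.mem_filter] at hj
      rw [show cs.simple j * (w * cs.simple i) = w from by
        rw [← hj.2, cs.simple_mul_simple_cancel_left]]
    have hsum1 : ∑ j ∈ T, p (some j) * lazyWalkWeight cs p n (cs.simple j * (w * cs.simple i))
        = (∑ j ∈ T, p (some j)) * lazyWalkWeight cs p n w := by
      rw [Finset.sum_mul]
      exact Finset.sum_congr rfl hTv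
    have hsum2 : ∑ j ∈ T, p (some j) * lazyWalkWeight cs p n (cs.simple j * w)
        = (∑ j ∈ T, p (some j)) * lazyWalkWeight cs p n (w * cs.simple i) := by
      rw [Finset.sum_mul]
      refine Finset.sum_congr rfl fun j hj => ?_
      rw [hT, Finset.mem_filter] at hj
      rw [hj.2]
    have hq : (∑ j ∈ T, p (some j)) ≤ p none := by
      rcases T.eq_empty_or_nonempty with he | ⟨j0, hj0⟩
      · rw [he, Finset.sum_empty]
        exact zero_le'
      · have hTsub : T = {j0} := by
          apply Finset.eq_singleton_iff_unique_mem.mpr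
          refine ⟨hj0, fun k hk => ?_⟩
          rw [hT, Finset.mem_filter] at hk
          have hj0' := hj0
          rw [hT, Finset.mem_filter] at hj0'
          exact simpleInj cs (mul_right_cancel (hk.2.trans hj0'.2.symm))
        rw [hTsub, Finset.sum_singleton]
        exact hp j0
    have hcomp : ∀ j ∈ Finset.univ.filter (fun j => ¬(cs.simple j * w = w * cs.simple i)),
        p (some j) * lazyWalkWeight cs p n (cs.simple j * (w * cs.simple i))
          ≤ p (some j) * lazyWalkWeight cs p n (cs.simple j * w) := by
      intro j hj
      rw [Finset.mem_filter] at hj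
      rcases Nat.lt_or_ge (cs.length (cs.simple j * w))
          (cs.length (cs.simple j * w * cs.simple i)) with hlt | hge
      · have hih := ih (cs.simple j * w) i hlt
        rw [mul_assoc] at hih
        exact mul_le_mul_right hih _
      · exfalso
        have hne := cs.length_mul_simple_ne (cs.simple j * w) i
        have hlt2 : cs.length (cs.simple j * w * cs.simple i)
            < cs.length (cs.simple j * w) := by omega
        exact hj.2 (keyLemma cs w i j h hlt2)
    rw [hsum1, hsum2]
    have hWv := ih w i h
    obtain ⟨d, hd⟩ := exists_add_of_le hq
    obtain ⟨e, he⟩ := exists_add_of_le hWv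
    have hS := Finset.sum_le_sum hcomp
    set q0 := ∑ j ∈ T, p (some j) with hq0
    set Wv := lazyWalkWeight cs p n (w * cs.simple i) with hWvdef
    set Wu := lazyWalkWeight cs p n w with hWudef
    set S1 := ∑ j ∈ Finset.univ.filter (fun j => ¬(cs.simple j * w = w * cs.simple i)),
        p (some j) * lazyWalkWeight cs p n (cs.simple j * (w * cs.simple i)) with hS1
    set S2 := ∑ j ∈ Finset.univ.filter (fun j => ¬(cs.simple j * w = w * cs.simple i)),
        p (some j) * lazyWalkWeight cs p n (cs.simple j * w) with hS2
    calc p none * Wv + (q0 * Wu + S1)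
        = (q0 * Wv + q0 * Wv + q0 * e + d * Wv) + S1 := by rw [hd, he]; ring
      _ ≤ ((q0 * Wv + q0 * Wv + q0 * e + d * Wv) + d * e) + S2 :=
          add_le_add (le_add_right le_rfl) hS
      _ = p none * Wu + (q0 * Wv + S2) := by rw [hd, he]; ring

end LazyWalkAux3

/-- For a lazy random walk on a Coxeter group with step weights `p` in which the
identity step is at least as likely as any generator, if `ℓ(w * s) > ℓ(w)` then
after any number of steps the walk is at least as likely to be at `w` as at `w * s`. -/
theorem lazyWalkWeight_mul_simple_le {B W : Type*} [Fintype B] [DecidableEq W]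
    [Group W] {M : CoxeterMatrix B} (cs : CoxeterSystem M W) (p : Option B → ℝ≥0)
    (hp : ∀ i : B, p (some i) ≤ p none) (w : W) (i : B)
    (h : cs.length w < cs.length (w * cs.simple i)) (n : ℕ) :
    lazyWalkWeight cs p n (w * cs.simple i) ≤ lazyWalkWeight cs p n w :=
  LazyWalkAux3.main cs p hp w i h n
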